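/- Let P be a finite poset on [n]. The enriched chain polytope E_P is a reflexive polytope: it is an n-dimensional lattice polytope containing the origin as its unique interior lattice point, and its dual polytope E_P^∨ = {y ∈ ℝ^n : ⟨x,y⟩ ≤ 1 for all x ∈ E_P} is also a lattice polytope. -/

import Mathlib

set_option linter.unusedSectionVars false


/-- `A` is an antichain of the poset `(Fin n, r)`. -/
def IsAntichainIn {n : ℕ} (r : Fin n → Fin n → Prop) (A : Set (Fin n)) : Prop :=
  ∀ i ∈ A, ∀ j ∈ A, i ≠ j → ¬ r i j ∧ ¬ r j i

/-- The set `E(P)` of signed indicator vectors of antichains of `P`. -/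
def signedAntichainVectors {n : ℕ} (r : Fin n → Fin n → Prop) : Set (Fin n → ℝ) :=
  {x | (∀ i, x i = 0 ∨ x i = 1 ∨ x i = -1) ∧ IsAntichainIn r {i | x i ≠ 0}}

/-- The enriched chain polytope `E_P`. -/
def enrichedChainPolytope {n : ℕ} (r : Fin n → Fin n → Prop) : Set (Fin n → ℝ) :=
  convexHull ℝ (signedAntichainVectors r)


/-- The dual (polar) body of a subset of `ℝ^n`. -/
def dualBody {n : ℕ} (S : Set (Fin n → ℝ)) : Set (Fin n → ℝ) :=
  {y | ∀ x ∈ S, (∑ i, x i * y i) ≤ 1}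


open Finset

section Galvin

variable {β : Type*} [DecidableEq β] (lt : β → β → Prop)

/-- antichain as Finset -/
def IsAC (B : Finset β) : Prop := ∀ x ∈ B, ∀ y ∈ B, x ≠ y → ¬ lt x y ∧ ¬ lt y x

def IsCh (C : Finset β) : Prop := ∀ x ∈ C, ∀ y ∈ C, x ≠ y → lt x y ∨ lt y x

lemma isAC_empty : IsAC lt (∅ : Finset β) := by intro x hx; simp at hx

lemma isAC_singleton (x : β) : IsAC lt ({x} : Finset β) := by
  intro u hu v hv huv
  simp only [Finset.mem_singleton] at hu hv
  exact absurd (hu.trans hv.symm) huv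

lemma isCh_empty : IsCh lt (∅ : Finset β) := by intro x hx; simp at hx

lemma isCh_singleton (x : β) : IsCh lt ({x} : Finset β) := by
  intro u hu v hv huv
  simp only [Finset.mem_singleton] at hu hv
  exact absurd (hu.trans hv.symm) huv

open Classical in
noncomputable def wdt (s : Finset β) : ℕ :=
  ((s.powerset.filter (IsAC lt)).sup Finset.card)

variable {lt}

open Classical in
lemma le_wdt {B s : Finset β} (hBs : B ⊆ s) (hB : IsAC lt B) : B.card ≤ wdt lt s := by
  classical
  apply Finset.le_sup (f := Finset.card)
  simp only [mem_filter, mem_powerset]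
  exact ⟨hBs, hB⟩

lemma wdt_mono {s t : Finset β} (h : s ⊆ t) : wdt lt s ≤ wdt lt t := by
  classical
  apply Finset.sup_mono
  intro B hB
  simp only [mem_filter, mem_powerset] at hB ⊢
  exact ⟨hB.1.trans h, hB.2⟩

lemma exists_wdt_antichain (s : Finset β) :
    ∃ B, B ⊆ s ∧ IsAC lt B ∧ B.card = wdt lt s := by
  classical
  have hne : (s.powerset.filter (fun B => IsAC lt B)).Nonempty := by
    refine ⟨∅, ?_⟩
    simp only [mem_filter, mem_powerset]
    exact ⟨empty_subset _, isAC_empty lt⟩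
  obtain ⟨B, hB, hcard⟩ := Finset.exists_mem_eq_sup _ hne Finset.card
  simp only [mem_filter, mem_powerset] at hB
  exact ⟨B, hB.1, hB.2, by rw [wdt, hcard]⟩

lemma exists_maximal_rel (htr : Transitive lt) (hirr : ∀ x, ¬ lt x x)
    {s : Finset β} (hs : s.Nonempty) : ∃ a ∈ s, ∀ b ∈ s, ¬ lt a b := by
  classical
  induction s using Finset.strongInduction with
  | _ s ih =>
    obtain ⟨x, hx⟩ := hs
    by_cases hemp : (s.filter (fun b => lt x b)).Nonempty
    · have hss : s.filter (fun b => lt x b) ⊂ s := by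
        refine Finset.filter_ssubset.mpr ⟨x, hx, hirr x⟩
      obtain ⟨a, ha, hamax⟩ := ih _ hss hemp
      simp only [mem_filter] at ha
      refine ⟨a, ha.1, fun b hb hab => ?_⟩
      have hxb : lt x b := htr ha.2 hab
      exact hamax b (mem_filter.mpr ⟨hb, hxb⟩) hab
    · refine ⟨x, hx, fun b hb hxb => hemp ⟨b, mem_filter.mpr ⟨hb, hxb⟩⟩⟩

theorem galvin (htr : Transitive lt) (hirr : ∀ x, ¬ lt x x) (s : Finset β) :
    ∃ f : Fin (wdt lt s) → Finset β,
      (∀ j, f j ⊆ s ∧ IsCh lt (f j)) ∧ (∀ x ∈ s, ∃ j, x ∈ f j) ∧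
      (∀ j j', j ≠ j' → Disjoint (f j) (f j')) := by
  classical
  induction s using Finset.strongInduction with
  | _ s ih =>
  rcases s.eq_empty_or_nonempty with rfl | hsne
  · exact ⟨fun j => ∅, fun j => ⟨empty_subset _, isCh_empty lt⟩,
      fun x hx => absurd hx (by simp), fun _ _ _ => disjoint_empty_left _⟩
  obtain ⟨a, has, hamax⟩ := exists_maximal_rel htr hirr hsne
  set s' := s.erase a with hs'
  have hs'ss : s' ⊂ s := Finset.erase_ssubset has
  set k := wdt lt s' with hk
  obtain ⟨f, hfc, hfcov, hfdisj⟩ := ih s' hs'ss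
  by_cases hk0 : k = 0
  -- then s' = ∅ and s = {a}
  · have hs'e : s' = ∅ := by
      by_contra hne
      obtain ⟨x, hx⟩ := Finset.nonempty_iff_ne_empty.mpr hne
      have : ({x} : Finset β).card ≤ k := le_wdt (by simpa using hx) (isAC_singleton lt x)
      simp [hk0] at this
    have hsa : s = {a} := by
      apply Finset.Subset.antisymm
      · intro x hx
        rcases eq_or_ne x a with rfl | hxa
        · simp
        · exact absurd (Finset.mem_erase.mpr ⟨hxa, hx⟩) (by rw [← hs', hs'e]; simp)
      · simpa using has
    have hw1 : 1 ≤ wdt lt s := by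
      have : ({a} : Finset β).card ≤ wdt lt s :=
        le_wdt (by simpa using has) (isAC_singleton lt a)
      simpa using this
    refine ⟨fun j => if (j : ℕ) = 0 then {a} else ∅, fun j => ?_, fun x hx => ?_, fun j j' hjj => ?_⟩
    · dsimp only
      split
      · exact ⟨by simpa using has, isCh_singleton lt a⟩
      · exact ⟨empty_subset _, isCh_empty lt⟩
    · rw [hsa] at hx; simp at hx; subst hx
      exact ⟨⟨0, hw1⟩, by simp⟩
    · rcases eq_or_ne (j : ℕ) 0 with h1 | h1 <;> rcases eq_or_ne (j' : ℕ) 0 with h2 | h2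
      · exact absurd (Fin.ext (h1.trans h2.symm)) hjj
      · simp [h1, h2]
      · simp [h1, h2]
      · simp [h1, h2]
  -- main case k ≥ 1
  have hkpos : 0 < k := Nat.pos_of_ne_zero hk0
  -- every k-antichain of s' meets every chain f j exactly once; in particular nonempty meets
  have hmeet : ∀ B : Finset β, B ⊆ s' → IsAC lt B → B.card = k → ∀ j, (B ∩ f j).Nonempty := by
    intro B hBs hBac hBk j
    have hcap : ∀ j : Fin k, (B ∩ f j).card ≤ 1 := by
      intro j'
      rw [Finset.card_le_one]
      intro u hu v hv
      simp only [Finset.mem_inter] at hu hv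
      by_contra huv
      rcases (hfc j').2 u hu.2 v hv.2 huv with h | h
      · exact (hBac u hu.1 v hv.1 huv).1 h
      · exact (hBac u hu.1 v hv.1 huv).2 h
    have hBdecomp : B = Finset.univ.biUnion (fun j : Fin k => B ∩ f j) := by
      apply Finset.Subset.antisymm
      · intro x hx
        obtain ⟨j', hj'⟩ := hfcov x (hBs hx)
        exact Finset.mem_biUnion.mpr ⟨j', Finset.mem_univ _, Finset.mem_inter.mpr ⟨hx, hj'⟩⟩
      · intro x hx
        obtain ⟨j', _, hj'⟩ := Finset.mem_biUnion.mp hx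
        exact (Finset.mem_inter.mp hj').1
    have hcardsum : B.card = ∑ j : Fin k, (B ∩ f j).card := by
      rw [hBdecomp]
      rw [Finset.card_biUnion]
      · exact Finset.sum_congr rfl (fun j' _ => by rw [← hBdecomp])
      · intro u _ v _ huv
        exact Finset.disjoint_of_subset_left (Finset.inter_subset_right)
          (Finset.disjoint_of_subset_right (Finset.inter_subset_right) (hfdisj u v huv))
    by_contra hne
    have h0 : (B ∩ f j).card = 0 := by
      simpa [Finset.not_nonempty_iff_eq_empty] using
        (by rwa [Finset.nonempty_iff_ne_empty, not_ne_iff,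
          ← Finset.card_eq_zero] at hne : (B ∩ f j).card = 0)
    have : B.card < k := by
      calc B.card = ∑ j' : Fin k, (B ∩ f j').card := hcardsum
        _ < ∑ _j' : Fin k, 1 := by
            apply Finset.sum_lt_sum (fun j' _ => hcap j')
            exact ⟨j, Finset.mem_univ _, by rw [h0]; norm_num⟩
        _ = k := by simp
    omega
  -- A j and its maximum a_j
  have hAj : ∀ j : Fin k, ∃ aj, aj ∈ f j ∧
      (∃ B, B ⊆ s' ∧ IsAC lt B ∧ B.card = k ∧ aj ∈ B) ∧
      (∀ x ∈ f j, (∃ B, B ⊆ s' ∧ IsAC lt B ∧ B.card = k ∧ x ∈ B) → x ≠ aj → lt x aj) := by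
    intro j
    set A : Finset β := (f j).filter (fun x => ∃ B, B ⊆ s' ∧ IsAC lt B ∧ B.card = k ∧ x ∈ B)
      with hA
    have hAne : A.Nonempty := by
      obtain ⟨B₀, hB₀s, hB₀ac, hB₀k⟩ := exists_wdt_antichain (lt := lt) s'
      obtain ⟨b, hb⟩ := hmeet B₀ hB₀s hB₀ac hB₀k j
      exact ⟨b, Finset.mem_filter.mpr ⟨(Finset.mem_inter.mp hb).2,
        B₀, hB₀s, hB₀ac, hB₀k, (Finset.mem_inter.mp hb).1⟩⟩
    obtain ⟨aj, haj, hajmax⟩ := exists_maximal_rel htr hirr hAne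
    rw [Finset.mem_filter] at haj
    refine ⟨aj, haj.1, haj.2, fun x hx hxB hxne => ?_⟩
    have hxA : x ∈ A := Finset.mem_filter.mpr ⟨hx, hxB⟩
    rcases (hfc j).2 x hx aj haj.1 hxne with h | h
    · exact h
    · exact absurd h (hajmax x hxA)
  choose aj hajf hajB hajmax using hAj
  by_cases hcase : ∃ j, lt (aj j) a
  -- Case (i)
  · obtain ⟨j₀, hj₀⟩ := hcase
    set D : Finset β := insert a ((f j₀).filter (fun x => x = aj j₀ ∨ lt x (aj j₀))) with hD
    have hDch : IsCh lt D := by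
      intro u hu v hv huv
      rw [hD, Finset.mem_insert] at hu hv
      rcases hu with rfl | hu <;> rcases hv with rfl | hv
      · exact absurd rfl huv
      · right
        rw [Finset.mem_filter] at hv
        rcases hv.2 with rfl | h
        · exact hj₀
        · exact htr h hj₀
      · left
        rw [Finset.mem_filter] at hu
        rcases hu.2 with rfl | h
        · exact hj₀
        · exact htr h hj₀
      · rw [Finset.mem_filter] at hu hv
        exact (hfc j₀).2 u hu.1 v hv.1 huv
    have hDs : D ⊆ s := by
      rw [hD]
      intro x hx
      rcases Finset.mem_insert.mp hx with rfl | hx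
      · exact has
      · exact (Finset.erase_subset a s) ((hfc j₀).1 (Finset.mem_filter.mp hx).1)
    set T : Finset β := s \ D with hT
    have hTss : T ⊂ s := by
      rw [hT]
      refine Finset.ssubset_iff_of_subset (Finset.sdiff_subset) |>.mpr
        ⟨a, has, by simp [hD]⟩
    have hwT : wdt lt T + 1 ≤ k := by
      have h1 : ∀ B, B ⊆ T → IsAC lt B → B.card ≤ k - 1 := by
        intro B hBT hBac
        have hBs' : B ⊆ s' := by
          intro x hx
          have hxT := hBT hx
          rw [hT, Finset.mem_sdiff] at hxT
          refine Finset.mem_erase.mpr ⟨?_, hxT.1⟩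
          rintro rfl
          exact hxT.2 (Finset.mem_insert_self _ _)
        have hle : B.card ≤ k := le_wdt hBs' hBac
        rcases Nat.lt_or_ge B.card k with h | h
        · omega
        have hBk : B.card = k := le_antisymm hle h
        exfalso
        obtain ⟨b, hb⟩ := hmeet B hBs' hBac hBk j₀
        rw [Finset.mem_inter] at hb
        have hbA : b = aj j₀ ∨ lt b (aj j₀) := by
          rcases eq_or_ne b (aj j₀) with rfl | hne
          · exact Or.inl rfl
          · exact Or.inr (hajmax j₀ b hb.2 ⟨B, hBs', hBac, hBk, hb.1⟩ hne)
        have hbD : b ∈ D := by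
          rw [hD]
          exact Finset.mem_insert_of_mem (Finset.mem_filter.mpr ⟨hb.2, hbA⟩)
        have hbT := hBT hb.1
        rw [hT, Finset.mem_sdiff] at hbT
        exact hbT.2 hbD
      have : wdt lt T ≤ k - 1 := by
        obtain ⟨B, hBT, hBac, hBcard⟩ := exists_wdt_antichain (lt := lt) T
        rw [← hBcard]; exact h1 B hBT hBac
      omega
    obtain ⟨g, hgc, hgcov, hgdisj⟩ := ih T hTss
    have hks : k ≤ wdt lt s := wdt_mono (Finset.erase_subset a s)
    have hTlt : wdt lt T < wdt lt s := by omega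
    refine ⟨fun j => if h : (j : ℕ) < wdt lt T then g ⟨j, h⟩
      else if (j : ℕ) = wdt lt T then D else ∅, ?_, ?_, ?_⟩
    · intro j
      dsimp only
      split
      · exact ⟨((hgc _).1).trans (Finset.sdiff_subset), (hgc _).2⟩
      · split
        · exact ⟨hDs, hDch⟩
        · exact ⟨empty_subset _, isCh_empty lt⟩
    · intro x hx
      by_cases hxD : x ∈ D
      · refine ⟨⟨wdt lt T, hTlt⟩, ?_⟩
        simp only [lt_irrefl, dif_neg, if_pos]
        exact hxD
      · have hxT : x ∈ T := by rw [hT, Finset.mem_sdiff]; exact ⟨hx, hxD⟩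
        obtain ⟨j, hj⟩ := hgcov x hxT
        refine ⟨⟨j, lt_trans j.2 hTlt⟩, ?_⟩
        simp only [j.2, dif_pos]
        exact hj
    · intro j j' hjj
      have hgT : ∀ (h : (j:ℕ) < wdt lt T), g ⟨j, h⟩ ⊆ T := fun h => (hgc _).1
      -- helper: D and T disjoint
      have hDT : ∀ x ∈ D, x ∉ T := by
        intro x hxD hxT
        rw [hT, Finset.mem_sdiff] at hxT
        exact hxT.2 hxD
      rcases Nat.lt_or_ge (j : ℕ) (wdt lt T) with h1 | h1 <;>
        rcases Nat.lt_or_ge (j' : ℕ) (wdt lt T) with h2 | h2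
      · simp only [dif_pos h1, dif_pos h2]
        apply hgdisj
        intro hcon
        have hv := congrArg Fin.val hcon
        exact hjj (Fin.ext hv)
      · simp only [dif_pos h1, dif_neg (not_lt.mpr h2)]
        split
        · exact Finset.disjoint_left.mpr (fun x hx hxD => hDT x hxD ((hgc _).1 hx))
        · exact disjoint_empty_right _
      · simp only [dif_neg (not_lt.mpr h1), dif_pos h2]
        split
        · exact Finset.disjoint_left.mpr (fun x hxD hx => hDT x hxD ((hgc _).1 hx))
        · exact disjoint_empty_left _
      · have hne : ¬((j : ℕ) = wdt lt T ∧ (j' : ℕ) = wdt lt T) := by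
          rintro ⟨e1, e2⟩
          exact hjj (Fin.ext (e1.trans e2.symm))
        simp only [dif_neg (not_lt.mpr h1), dif_neg (not_lt.mpr h2)]
        rcases eq_or_ne ((j : ℕ)) (wdt lt T) with e1 | e1 <;>
          rcases eq_or_ne ((j' : ℕ)) (wdt lt T) with e2 | e2
        · exact absurd ⟨e1, e2⟩ hne
        · simp [e1, e2]
        · simp [e1, e2]
        · simp [e1, e2]
  -- Case (ii): a incomparable with all aj
  · push_neg at hcase
    have hajs' : ∀ j, aj j ∈ s' := fun j => (hfc j).1 (hajf j)
    have hajpair : ∀ j j', j ≠ j' → ¬ lt (aj j) (aj j') := by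
      intro j j' hjj hcon
      obtain ⟨B', hB's, hB'ac, hB'k, hmem⟩ := hajB j'
      obtain ⟨b, hb⟩ := hmeet B' hB's hB'ac hB'k j
      rw [Finset.mem_inter] at hb
      have hbaj : b = aj j ∨ lt b (aj j) := by
        rcases eq_or_ne b (aj j) with rfl | hne
        · exact Or.inl rfl
        · exact Or.inr (hajmax j b hb.2 ⟨B', hB's, hB'ac, hB'k, hb.1⟩ hne)
      have hlt : lt b (aj j') := by
        rcases hbaj with rfl | h
        · exact hcon
        · exact htr h hcon
      have hbne : b ≠ aj j' := fun h => hirr _ (h ▸ hlt)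
      exact (hB'ac b hb.1 (aj j') hmem hbne).1 hlt
    have hajinj : Function.Injective aj := by
      intro j j' h
      by_contra hjj
      have := hfdisj j j' hjj
      exact (Finset.disjoint_left.mp this (hajf j)) (h ▸ hajf j')
    set A : Finset β := insert a (Finset.univ.image aj) with hA
    have hanotin : a ∉ Finset.univ.image aj := by
      intro h
      obtain ⟨j, _, hj⟩ := Finset.mem_image.mp h
      have : aj j ∈ s' := hajs' j
      rw [hj] at this
      exact (Finset.mem_erase.mp this).1 rfl
    have hAcard : A.card = k + 1 := by
      rw [hA, Finset.card_insert_of_notMem hanotin,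
        Finset.card_image_of_injective _ hajinj]
      simp
    have hAac : IsAC lt A := by
      intro u hu v hv huv
      rw [hA, Finset.mem_insert] at hu hv
      rcases hu with rfl | hu <;> rcases hv with rfl | hv
      · exact absurd rfl huv
      · obtain ⟨j, _, rfl⟩ := Finset.mem_image.mp hv
        exact ⟨hamax _ ((Finset.erase_subset _ _) (hajs' j)), hcase j⟩
      · obtain ⟨j, _, rfl⟩ := Finset.mem_image.mp hu
        exact ⟨hcase j, hamax _ ((Finset.erase_subset _ _) (hajs' j))⟩
      · obtain ⟨j, _, rfl⟩ := Finset.mem_image.mp hu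
        obtain ⟨j', _, rfl⟩ := Finset.mem_image.mp hv
        have hjj : j ≠ j' := fun h => huv (by rw [h])
        exact ⟨hajpair j j' hjj, hajpair j' j hjj.symm⟩
    have hAs : A ⊆ s := by
      rw [hA]
      intro x hx
      rcases Finset.mem_insert.mp hx with rfl | hx
      · exact has
      · obtain ⟨j, _, rfl⟩ := Finset.mem_image.mp hx
        exact (Finset.erase_subset _ _) (hajs' j)
    have hk1 : k + 1 ≤ wdt lt s := by
      have := le_wdt hAs hAac
      rwa [hAcard] at this
    refine ⟨fun j => if h : (j : ℕ) < k then f ⟨j, h⟩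
      else if (j : ℕ) = k then {a} else ∅, ?_, ?_, ?_⟩
    · intro j
      dsimp only
      split
      · exact ⟨((hfc _).1).trans (Finset.erase_subset _ _), (hfc _).2⟩
      · split
        · exact ⟨by simpa using has, isCh_singleton lt a⟩
        · exact ⟨empty_subset _, isCh_empty lt⟩
    · intro x hx
      rcases eq_or_ne x a with rfl | hxa
      · refine ⟨⟨k, by omega⟩, ?_⟩
        simp
      · obtain ⟨j, hj⟩ := hfcov x (Finset.mem_erase.mpr ⟨hxa, hx⟩)
        refine ⟨⟨j, by omega⟩, ?_⟩
        simp only [j.2, dif_pos]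
        rw [dif_pos (by exact j.2)]
        exact hj
    · intro j j' hjj
      have hfs' : ∀ (h : (j:ℕ) < k), f ⟨j, h⟩ ⊆ s' := fun h => (hfc _).1
      have hnotins' : ∀ (jj : Fin k), a ∉ f jj := by
        intro jj hcon
        exact (Finset.mem_erase.mp ((hfc jj).1 hcon)).1 rfl
      rcases Nat.lt_or_ge (j : ℕ) k with h1 | h1 <;>
        rcases Nat.lt_or_ge (j' : ℕ) k with h2 | h2
      · simp only [dif_pos h1, dif_pos h2]
        apply hfdisj
        intro hcon
        have hv := congrArg Fin.val hcon
        exact hjj (Fin.ext hv)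
      · simp only [dif_pos h1, dif_neg (not_lt.mpr h2)]
        split
        · exact Finset.disjoint_right.mpr (fun x hx => by
            simp at hx; subst hx; exact hnotins' _)
        · exact disjoint_empty_right _
      · simp only [dif_neg (not_lt.mpr h1), dif_pos h2]
        split
        · exact Finset.disjoint_left.mpr (fun x hx => by
            simp at hx; subst hx; exact hnotins' _)
        · exact disjoint_empty_left _
      · have hne : ¬((j : ℕ) = k ∧ (j' : ℕ) = k) := by
          rintro ⟨e1, e2⟩
          exact hjj (Fin.ext (e1.trans e2.symm))
        simp only [dif_neg (not_lt.mpr h1), dif_neg (not_lt.mpr h2)]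
        rcases eq_or_ne ((j : ℕ)) k with e1 | e1 <;>
          rcases eq_or_ne ((j' : ℕ)) k with e2 | e2
        · exact absurd ⟨e1, e2⟩ hne
        · simp [e1, e2]
        · simp [e1, e2]
        · simp [e1, e2]

end Galvin
section Weighted

variable {n : ℕ} {r : Fin n → Fin n → Prop}

/-- `S` is a chain of the poset. -/
def IsChainIn (r : Fin n → Fin n → Prop) (S : Set (Fin n)) : Prop :=
  ∀ i ∈ S, ∀ j ∈ S, i ≠ j → r i j ∨ r j i

theorem weighted_cover (hr : IsPartialOrder (Fin n) r) (N : ℕ) (u : Fin n → ℕ)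
    (hu : ∀ A : Finset (Fin n), IsAntichainIn r ↑A → ∑ i ∈ A, u i ≤ N) :
    ∃ C : Fin N → Finset (Fin n), (∀ j, IsChainIn r ↑(C j)) ∧
      ∀ i, (Finset.univ.filter (fun j => i ∈ C j)).card = u i := by
  classical
  have htrans : ∀ a b c : Fin n, r a b → r b c → r a c := fun a b c => hr.trans a b c
  have hanti : ∀ a b : Fin n, r a b → r b a → a = b := fun a b => hr.antisymm a b
  let β := (Σ i : Fin n, Fin (u i))
  let lt : β → β → Prop := fun p q => p.1 ≠ q.1 ∧ r p.1 q.1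
  have htr : Transitive lt := by
    rintro p q w ⟨hpq1, hpq2⟩ ⟨hqw1, hqw2⟩
    refine ⟨?_, htrans _ _ _ hpq2 hqw2⟩
    intro h
    exact hpq1 (hanti _ _ hpq2 (h ▸ hqw2))
  have hirr : ∀ p : β, ¬ lt p p := fun p h => h.1 rfl
  -- bound on antichains of the blowup
  have hwdt : wdt lt (Finset.univ : Finset β) ≤ N := by
    rw [wdt]
    apply Finset.sup_le
    intro B hB
    rw [Finset.mem_filter] at hB
    have hBac := hB.2
    have hAac : IsAntichainIn r ↑(B.image Sigma.fst) := by
      intro i hi j hj hij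
      simp only [Finset.coe_image, Set.mem_image, Finset.mem_coe] at hi hj
      obtain ⟨p, hp, rfl⟩ := hi
      obtain ⟨q, hq, rfl⟩ := hj
      have hpq : p ≠ q := fun h => hij (congrArg Sigma.fst h)
      have := hBac p hp q hq hpq
      constructor
      · intro hcon; exact this.1 ⟨hij, hcon⟩
      · intro hcon; exact this.2 ⟨hij.symm, hcon⟩
    have hsub : B ⊆ (B.image Sigma.fst).sigma (fun i => (Finset.univ : Finset (Fin (u i)))) := by
      intro p hp
      rw [Finset.mem_sigma]
      exact ⟨Finset.mem_image_of_mem _ hp, Finset.mem_univ _⟩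
    calc B.card ≤ ((B.image Sigma.fst).sigma
          fun i => (Finset.univ : Finset (Fin (u i)))).card := Finset.card_le_card hsub
      _ = ∑ i ∈ B.image Sigma.fst, u i := by rw [Finset.card_sigma]; simp
      _ ≤ N := hu _ hAac
  obtain ⟨f, hfc, hfcov, hfdisj⟩ := galvin htr hirr (Finset.univ : Finset β)
  refine ⟨fun j => if h : (j : ℕ) < wdt lt (Finset.univ : Finset β)
      then (f ⟨j, h⟩).image Sigma.fst else ∅, ?_, ?_⟩
  · intro j i hi i' hi' hii
    by_cases h : (j : ℕ) < wdt lt (Finset.univ : Finset β)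
    · simp only [dif_pos h, Finset.coe_image, Set.mem_image, Finset.mem_coe] at hi hi'
      obtain ⟨p, hp, rfl⟩ := hi
      obtain ⟨q, hq, rfl⟩ := hi'
      have hpq : p ≠ q := fun hcon => hii (congrArg Sigma.fst hcon)
      rcases (hfc ⟨j, h⟩).2 p hp q hq hpq with hlt' | hlt'
      · exact Or.inl hlt'.2
      · exact Or.inr hlt'.2
    · simp only [dif_neg h] at hi
      simp at hi
  · intro i
    have huniq : ∀ p : β, ∃! j, p ∈ f j := by
      intro p
      obtain ⟨j, hj⟩ := hfcov p (Finset.mem_univ p)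
      refine ⟨j, hj, fun j' hj' => ?_⟩
      by_contra hne
      exact (Finset.disjoint_left.mp (hfdisj j' j hne) hj') hj
    choose φ hφ hφuniq using huniq
    have key : ∀ j : Fin N, (i ∈ if h : (j : ℕ) < wdt lt (Finset.univ : Finset β)
        then (f ⟨j, h⟩).image Sigma.fst else ∅) ↔
        ∃ k : Fin (u i), ((φ ⟨i, k⟩).val) = (j : ℕ) := by
      intro j
      constructor
      · intro hij
        by_cases h : (j : ℕ) < wdt lt (Finset.univ : Finset β)
        · rw [dif_pos h] at hij
          obtain ⟨p, hp, hp1⟩ := Finset.mem_image.mp hij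
          obtain ⟨i', k⟩ := p
          cases hp1
          refine ⟨k, ?_⟩
          have heq : φ ⟨i', k⟩ = ⟨j, h⟩ := (hφuniq ⟨i', k⟩ ⟨j, h⟩ hp).symm
          rw [heq]
        · rw [dif_neg h] at hij; simp at hij
      · rintro ⟨k, hk⟩
        have hjm : (j : ℕ) < wdt lt (Finset.univ : Finset β) := by
          rw [← hk]; exact (φ ⟨i, k⟩).2
        rw [dif_pos hjm]
        refine Finset.mem_image.mpr ⟨⟨i, k⟩, ?_, rfl⟩
        have heq : φ (⟨i, k⟩ : β) = ⟨j, hjm⟩ := Fin.ext hk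
        rw [← heq]
        exact hφ _
    have hbij := Finset.card_bij (s := (Finset.univ : Finset (Fin (u i))))
      (t := Finset.univ.filter (fun j : Fin N =>
        i ∈ if h : (j : ℕ) < wdt lt (Finset.univ : Finset β)
          then (f ⟨j, h⟩).image Sigma.fst else ∅))
      (fun k _ => (⟨(φ ⟨i, k⟩).val, lt_of_lt_of_le (φ ⟨i, k⟩).2 hwdt⟩ : Fin N))
      ?_ ?_ ?_
    · rw [← hbij]; simp
    · intro k _
      rw [Finset.mem_filter]
      refine ⟨Finset.mem_univ _, ?_⟩
      rw [key]
      exact ⟨k, rfl⟩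
    · intro k1 _ k2 _ heq
      have hv := congrArg Fin.val heq
      dsimp only at hv
      have hsame : φ (⟨i, k1⟩ : β) = φ ⟨i, k2⟩ := Fin.ext hv
      have h1 : (⟨i, k1⟩ : β) ∈ f (φ ⟨i, k2⟩) := hsame ▸ hφ ⟨i, k1⟩
      have h2 : (⟨i, k2⟩ : β) ∈ f (φ ⟨i, k2⟩) := hφ ⟨i, k2⟩
      by_contra hne
      have hpq : (⟨i, k1⟩ : β) ≠ ⟨i, k2⟩ := by
        intro hcon
        apply hne
        have := congrArg (fun p : β => (p.2 : ℕ)) hcon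
        exact Fin.ext this
      rcases (hfc (φ ⟨i, k2⟩)).2 _ h1 _ h2 hpq with hlt' | hlt'
      · exact hlt'.1 rfl
      · exact hlt'.1 rfl
    · intro j hj
      rw [Finset.mem_filter] at hj
      obtain ⟨k, hk⟩ := (key j).mp hj.2
      exact ⟨k, Finset.mem_univ _, Fin.ext hk⟩

end Weighted
section Geometry

open Finset

variable {n : ℕ} {r : Fin n → Fin n → Prop}

lemma antichainIn_mono {S S' : Set (Fin n)} (h : IsAntichainIn r S) (hss : S' ⊆ S) :
    IsAntichainIn r S' := fun i hi j hj hij => h i (hss hi) j (hss hj) hij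

lemma chainIn_mono {S S' : Set (Fin n)} (h : IsChainIn r S) (hss : S' ⊆ S) :
    IsChainIn r S' := fun i hi j hj hij => h i (hss hi) j (hss hj) hij

lemma zero_mem_sav : (0 : Fin n → ℝ) ∈ signedAntichainVectors r := by
  constructor
  · intro i; left; rfl
  · intro i hi
    simp at hi

lemma single_mem_sav (i : Fin n) {s : ℝ} (hs : s = 1 ∨ s = -1) :
    (fun j => if i = j then s else 0) ∈ signedAntichainVectors r := by
  constructor
  · intro j
    by_cases h : i = j
    · simp only [h, if_pos]
      rcases hs with rfl | rfl
      · right; left; rfl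
      · right; right; rfl
    · simp [h]
  · intro u hu v hv huv
    exfalso
    apply huv
    simp only [Set.mem_setOf_eq] at hu hv
    by_cases h1 : i = u
    · by_cases h2 : i = v
      · exact h1 ▸ h2
      · simp [h2] at hv
    · simp [h1] at hu

/-- linearity of `x ↦ ∑ x i * y i` -/
lemma isLinearMap_dot (y : Fin n → ℝ) : IsLinearMap ℝ (fun x : Fin n → ℝ => ∑ i, x i * y i) := by
  constructor
  · intro a b
    simp [add_mul, Finset.sum_add_distrib]
  · intro c a
    simp [smul_eq_mul, Finset.mul_sum, mul_assoc]

lemma hull_subset_halfspace {S : Set (Fin n → ℝ)} {y : Fin n → ℝ} {c : ℝ}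
    (h : ∀ v ∈ S, ∑ i, v i * y i ≤ c) :
    convexHull ℝ S ⊆ {x | ∑ i, x i * y i ≤ c} :=
  convexHull_min h (convex_halfSpace_le (isLinearMap_dot y) c)

lemma mem_dual_iff {y : Fin n → ℝ} :
    y ∈ dualBody (enrichedChainPolytope r) ↔
      ∀ v ∈ signedAntichainVectors r, ∑ i, v i * y i ≤ 1 := by
  constructor
  · intro h v hv
    exact h v (subset_convexHull ℝ _ hv)
  · intro h x hx
    exact hull_subset_halfspace h hx

lemma E_le_one (i : Fin n) : enrichedChainPolytope r ⊆ {x | x i ≤ 1} := by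
  apply convexHull_min
  · intro v hv
    rcases hv.1 i with h | h | h <;> rw [Set.mem_setOf_eq, h] <;> norm_num
  · exact convex_halfSpace_le ⟨fun a b => rfl, fun c a => rfl⟩ 1

lemma E_ge_neg_one (i : Fin n) : enrichedChainPolytope r ⊆ {x | -1 ≤ x i} := by
  apply convexHull_min
  · intro v hv
    rcases hv.1 i with h | h | h <;> rw [Set.mem_setOf_eq, h] <;> norm_num
  · exact convex_halfSpace_ge ⟨fun a b => rfl, fun c a => rfl⟩ (-1)

lemma crosspoly_subset : {x : Fin n → ℝ | ∑ i, |x i| < 1} ⊆ enrichedChainPolytope r := by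
  intro x hx
  rw [Set.mem_setOf_eq] at hx
  have habs : ∀ i, 0 ≤ |x i| := fun i => abs_nonneg _
  have hsum0 : 0 ≤ ∑ i, |x i| := Finset.sum_nonneg fun i _ => habs i
  set w : Option (Fin n) → ℝ := fun o => o.elim (1 - ∑ i, |x i|) (fun i => |x i|) with hw
  set z : Option (Fin n) → (Fin n → ℝ) := fun o =>
    o.elim 0 (fun i j => if i = j then (if 0 ≤ x i then (1:ℝ) else -1) else 0) with hz
  have hw0 : ∀ o ∈ (Finset.univ : Finset (Option (Fin n))), 0 ≤ w o := by
    intro o _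
    match o with
    | none => simp only [hw]; simp; linarith
    | some i => simp only [hw]; simpa using habs i
  have hwsum : ∑ o : Option (Fin n), w o = 1 := by
    rw [Fintype.sum_option]
    simp only [hw]
    simp
  have hzV : ∀ o ∈ (Finset.univ : Finset (Option (Fin n))),
      z o ∈ signedAntichainVectors r := by
    intro o _
    match o with
    | none => exact zero_mem_sav
    | some i =>
      exact single_mem_sav i (by split <;> simp)
  have hcm : Finset.univ.centerMass w z = x := by
    rw [Finset.centerMass, hwsum]
    rw [inv_one, one_smul]
    funext j
    rw [Finset.sum_apply]
    rw [Fintype.sum_option]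
    simp only [hw, hz, Option.elim, Pi.smul_apply, smul_eq_mul, Pi.zero_apply, mul_zero, zero_add]
    have : ∀ i : Fin n, |x i| * (if i = j then (if 0 ≤ x i then (1:ℝ) else -1) else 0)
        = if i = j then |x i| * (if 0 ≤ x i then (1:ℝ) else -1) else 0 := by
      intro i; split <;> simp
    rw [Finset.sum_congr rfl (fun i _ => this i)]
    rw [Finset.sum_ite_eq']
    simp only [Finset.mem_univ, if_pos]
    by_cases h : 0 ≤ x j
    · rw [if_pos h, mul_one, abs_of_nonneg h]
    · rw [if_neg h, abs_of_neg (not_le.mp h)]; ring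
  rw [← hcm]
  exact Finset.centerMass_mem_convexHull _ hw0 (by rw [hwsum]; norm_num) hzV

lemma crosspoly_open : IsOpen {x : Fin n → ℝ | ∑ i, |x i| < 1} := by
  have hc : Continuous fun x : Fin n → ℝ => ∑ i, |x i| :=
    continuous_finset_sum _ fun i _ => (continuous_apply i).abs
  exact isOpen_lt hc continuous_const

lemma zero_mem_interior_E : (0 : Fin n → ℝ) ∈ interior (enrichedChainPolytope r) := by
  rw [mem_interior]
  refine ⟨{x : Fin n → ℝ | ∑ i, |x i| < 1}, crosspoly_subset, crosspoly_open, ?_⟩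
  simp

lemma dual_convex (S : Set (Fin n → ℝ)) : Convex ℝ (dualBody S) := by
  intro y1 h1 y2 h2 a b ha hb hab
  intro x hx
  have e : ∑ i, x i * (a • y1 + b • y2) i
      = a * (∑ i, x i * y1 i) + b * (∑ i, x i * y2 i) := by
    rw [Finset.mul_sum, Finset.mul_sum, ← Finset.sum_add_distrib]
    exact Finset.sum_congr rfl fun i _ => by
      simp only [Pi.add_apply, Pi.smul_apply, smul_eq_mul]; ring
  rw [e]
  have g1 := h1 x hx
  have g2 := h2 x hx
  nlinarith [mul_le_mul_of_nonneg_left g1 ha, mul_le_mul_of_nonneg_left g2 hb]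

lemma dual_closed (S : Set (Fin n → ℝ)) : IsClosed (dualBody S) := by
  have : dualBody S = ⋂ x ∈ S, {y : Fin n → ℝ | ∑ i, x i * y i ≤ 1} := by
    ext y
    simp [dualBody, Set.mem_iInter]
  rw [this]
  exact isClosed_biInter fun x hx => isClosed_le
    (continuous_finset_sum _ fun i _ => (continuous_const.mul (continuous_apply i))) continuous_const

lemma zero_mem_interior_D :
    (0 : Fin n → ℝ) ∈ interior (dualBody (enrichedChainPolytope r)) := by
  rw [mem_interior]
  refine ⟨{x : Fin n → ℝ | ∑ i, |x i| < 1}, ?_, crosspoly_open, by simp⟩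
  intro y hy
  rw [Set.mem_setOf_eq] at hy
  rw [mem_dual_iff]
  intro v hv
  calc ∑ i, v i * y i ≤ ∑ i, |y i| := by
        apply Finset.sum_le_sum
        intro i _
        calc v i * y i ≤ |v i * y i| := le_abs_self _
          _ = |v i| * |y i| := abs_mul _ _
          _ ≤ 1 * |y i| := by
              apply mul_le_mul_of_nonneg_right _ (abs_nonneg _)
              rcases hv.1 i with h | h | h <;> rw [h] <;> norm_num
          _ = |y i| := one_mul _
    _ ≤ 1 := le_of_lt hy

lemma absSum_le {y : Fin n → ℝ} (hy : y ∈ dualBody (enrichedChainPolytope r))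
    (A : Finset (Fin n)) (hA : IsAntichainIn r ↑A) : ∑ i ∈ A, |y i| ≤ 1 := by
  set v : Fin n → ℝ := fun i => if i ∈ A then (if 0 ≤ y i then (1:ℝ) else -1) else 0 with hv
  have hvV : v ∈ signedAntichainVectors r := by
    constructor
    · intro i
      simp only [hv]
      split
      · split
        · right; left; rfl
        · right; right; rfl
      · left; rfl
    · apply antichainIn_mono hA
      intro i hi
      simp only [Set.mem_setOf_eq, hv] at hi
      by_contra hiA
      rw [Finset.mem_coe] at hiA
      rw [if_neg hiA] at hi
      exact hi rfl
  have h1 := mem_dual_iff.mp hy v hvV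
  have h2 : ∑ i, v i * y i = ∑ i ∈ A, |y i| := by
    rw [← Finset.sum_subset (Finset.subset_univ A) (fun i _ hiA => by
      simp [hv, hiA])]
    apply Finset.sum_congr rfl
    intro i hi
    simp only [hv, if_pos hi]
    by_cases h : 0 ≤ y i
    · rw [if_pos h, one_mul, abs_of_nonneg h]
    · rw [if_neg h, abs_of_neg (not_le.mp h)]; ring
  rw [← h2]
  exact h1

/-- signed chain vectors -/
def signedChainVectors (r : Fin n → Fin n → Prop) : Set (Fin n → ℝ) :=
  {v | (∀ i, v i = 0 ∨ v i = 1 ∨ v i = -1) ∧ IsChainIn r {i | v i ≠ 0}}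

lemma scv_finite : (signedChainVectors r).Finite := by
  have hfin : (Set.pi Set.univ (fun _ : Fin n => ({0,1,-1} : Set ℝ))).Finite :=
    Set.Finite.pi fun _ => ((Set.finite_singleton (-1)).insert 1).insert 0
  apply Set.Finite.subset hfin
  intro v hv i _
  rcases hv.1 i with h | h | h <;> rw [h] <;> simp

lemma scv_subset_dual {v : Fin n → ℝ} (hv : v ∈ signedChainVectors r) :
    v ∈ dualBody (enrichedChainPolytope r) := by
  rw [mem_dual_iff]
  intro x hx
  classical
  set T : Finset (Fin n) := Finset.univ.filter (fun i => x i ≠ 0 ∧ v i ≠ 0) with hT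
  have hTcard : T.card ≤ 1 := by
    rw [Finset.card_le_one]
    intro a ha b hb
    by_contra hab
    simp only [hT, Finset.mem_filter] at ha hb
    have hacx := hx.2 a ha.2.1 b hb.2.1 hab
    rcases hv.2 a ha.2.2 b hb.2.2 hab with h | h
    · exact hacx.1 h
    · exact hacx.2 h
  have he : ∑ i, x i * v i = ∑ i ∈ T, x i * v i := by
    rw [Finset.sum_subset (Finset.subset_univ T)]
    intro i _ hiT
    simp only [hT, Finset.mem_filter, Finset.mem_univ, true_and, not_and_or, not_ne_iff] at hiT
    rcases hiT with h | h <;> rw [h] <;> ring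
  rw [he]
  calc ∑ i ∈ T, x i * v i ≤ ∑ i ∈ T, 1 := by
        apply Finset.sum_le_sum
        intro i _
        rcases hx.1 i with h | h | h <;> rcases hv.1 i with h' | h' | h' <;>
          rw [h, h'] <;> norm_num
    _ = T.card := by simp
    _ ≤ 1 := by exact_mod_cast hTcard

lemma rat_point_of_open {W : Set (Fin n → ℝ)} (hW : IsOpen W) {z : Fin n → ℝ} (hz : z ∈ W) :
    ∃ q ∈ W, ∀ i, ∃ a : ℚ, q i = a := by
  obtain ⟨ε, hε, hball⟩ := Metric.isOpen_iff.mp hW z hz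
  have hq : ∀ i, ∃ a : ℚ, z i < a ∧ (a : ℝ) < z i + ε / 2 :=
    fun i => exists_rat_btwn (by linarith)
  choose a ha1 ha2 using hq
  refine ⟨fun i => (a i : ℝ), hball ?_, fun i => ⟨a i, rfl⟩⟩
  rw [Metric.mem_ball]
  rw [dist_pi_lt_iff hε]
  intro i
  rw [Real.dist_eq, abs_lt]
  constructor <;> [linarith [ha1 i, ha2 i]; linarith [ha1 i, ha2 i]]

lemma rational_mem_hull_scv (hr : IsPartialOrder (Fin n) r) {y : Fin n → ℝ}
    (hy : y ∈ dualBody (enrichedChainPolytope r)) (hrat : ∀ i, ∃ a : ℚ, y i = a) :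
    y ∈ convexHull ℝ (signedChainVectors r) := by
  classical
  choose a ha using hrat
  set N : ℕ := ∏ i, (a i).den with hN
  have hNpos : 0 < N := Finset.prod_pos fun i _ => (a i).pos
  have hNne : (N : ℝ) ≠ 0 := by positivity
  have hdvd : ∀ i, (a i).den ∣ N := fun i => Finset.dvd_prod_of_mem _ (Finset.mem_univ i)
  set w : Fin n → ℤ := fun i => (a i).num * ((N : ℤ) / ((a i).den : ℤ)) with hw
  have hyw : ∀ i, y i = (w i : ℝ) / N := by
    intro i
    have hdenne : ((a i).den : ℝ) ≠ 0 := by positivity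
    have hc : ((a i).den : ℤ) * ((N:ℤ) / ((a i).den : ℤ)) = N := by
      apply Int.mul_ediv_cancel'
      exact_mod_cast hdvd i
    have h1 : (a i : ℝ) * N = (w i : ℝ) := by
      have : ((w i : ℝ)) = ((a i).num : ℝ) * (((N:ℤ) / ((a i).den : ℤ) : ℤ) : ℝ) := by
        simp [hw]
      rw [this]
      have h2 : (a i : ℝ) = ((a i).num : ℝ) / ((a i).den : ℝ) := by
        rw [Rat.cast_def]
      rw [h2]
      have h3 : ((N : ℝ)) = ((a i).den : ℝ) * (((N:ℤ) / ((a i).den : ℤ) : ℤ) : ℝ) := by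
        exact_mod_cast congrArg (fun t : ℤ => (t : ℝ)) hc.symm
      rw [h3]
      field_simp
    rw [ha i, eq_div_iff hNne, h1]
  set u : Fin n → ℕ := fun i => (w i).natAbs with hu
  have habs : ∀ i, |y i| = (u i : ℝ) / N := by
    intro i
    rw [hyw i, abs_div, abs_of_pos (by positivity : (0:ℝ) < (N:ℝ))]
    congr 1
    simp [hu, Nat.cast_natAbs]
  have husum : ∀ A : Finset (Fin n), IsAntichainIn r ↑A → ∑ i ∈ A, u i ≤ N := by
    intro A hA
    have h1 := absSum_le hy A hA
    rw [Finset.sum_congr rfl (fun i _ => habs i), ← Finset.sum_div,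
      div_le_one (by positivity : (0:ℝ) < (N:ℝ))] at h1
    exact_mod_cast h1
  obtain ⟨C, hCch, hCcount⟩ := weighted_cover hr N u husum
  set s : Fin n → ℝ := fun i => if 0 ≤ y i then 1 else -1 with hs
  set g : Fin N → (Fin n → ℝ) := fun j i => if i ∈ C j then s i else 0 with hg
  have hgS : ∀ j, g j ∈ signedChainVectors r := by
    intro j
    constructor
    · intro i
      simp only [hg, hs]
      split
      · split
        · right; left; rfl
        · right; right; rfl
      · left; rfl
    · apply chainIn_mono (hCch j)
      intro i hi
      simp only [Set.mem_setOf_eq, hg] at hi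
      by_contra hiC
      rw [Finset.mem_coe] at hiC
      rw [if_neg hiC] at hi
      exact hi rfl
  have hsum_i : ∀ i, ∑ j, g j i = (w i : ℝ) := by
    intro i
    have h1 : ∑ j, g j i = (u i : ℝ) * s i := by
      simp only [hg]
      rw [← Finset.sum_filter]
      rw [Finset.sum_const]
      rw [← hCcount i]
      simp [nsmul_eq_mul]
    rw [h1]
    by_cases h : 0 ≤ y i
    · have hw0 : 0 ≤ w i := by
        have h2 : (0:ℝ) ≤ (w i : ℝ) := by
          by_contra hcon
          push_neg at hcon
          have hneg : (w i : ℝ) / N < 0 := div_neg_of_neg_of_pos hcon (by positivity)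
          rw [← hyw i] at hneg
          linarith
        exact_mod_cast h2
      simp only [hs, if_pos h, mul_one, hu]
      have habs2 : |w i| = w i := abs_of_nonneg hw0
      rw [Nat.cast_natAbs]
      exact_mod_cast habs2
    · have hw0 : w i ≤ 0 := by
        push_neg at h
        have : (w i : ℝ) / N < 0 := by rw [← hyw i]; exact h
        have h2 : (w i : ℝ) < 0 := by
          by_contra hcon
          push_neg at hcon
          have : (0:ℝ) ≤ (w i : ℝ) / N := div_nonneg hcon (by positivity)
          linarith
        have : w i < 0 := by exact_mod_cast h2
        omega
      simp only [hs, if_neg h]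
      have habs2 : |w i| = -(w i) := abs_of_nonpos hw0
      have h3 : ((u i : ℝ)) = -(w i : ℝ) := by
        simp only [hu]
        rw [Nat.cast_natAbs]
        exact_mod_cast habs2
      rw [h3]
      ring
  have hcm : Finset.univ.centerMass (fun _ : Fin N => (N : ℝ)⁻¹) g = y := by
    rw [Finset.centerMass]
    have hws : ∑ _j : Fin N, (N:ℝ)⁻¹ = 1 := by
      rw [Finset.sum_const]
      simp [nsmul_eq_mul]
      rw [mul_inv_cancel₀ hNne]
    rw [hws, inv_one, one_smul]
    funext i
    rw [Finset.sum_apply]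
    simp only [Pi.smul_apply, smul_eq_mul]
    rw [← Finset.mul_sum, hsum_i i, inv_mul_eq_div]
    exact (hyw i).symm
  rw [← hcm]
  apply Finset.centerMass_mem_convexHull
  · intro j _; positivity
  · rw [Finset.sum_const]; simp [nsmul_eq_mul]; positivity
  · intro j _; exact hgS j

end Geometry
section Main

variable {n : ℕ} {r : Fin n → Fin n → Prop}

lemma affine_top : affineSpan ℝ (enrichedChainPolytope r) = ⊤ := by
  rw [enrichedChainPolytope, affineSpan_convexHull]
  have hsingle : ∀ i : Fin n, (Pi.single i (1:ℝ)) ∈ signedAntichainVectors r := by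
    intro i
    have heq : Pi.single i (1:ℝ) = (fun j => if i = j then (1:ℝ) else 0) := by
      funext j
      rw [Pi.single_apply]
      by_cases h : j = i
      · simp [h]
      · rw [if_neg h, if_neg (fun hh => h hh.symm)]
    rw [heq]
    exact single_mem_sav i (Or.inl rfl)
  have hvs : vectorSpan ℝ (signedAntichainVectors r) = ⊤ := by
    apply eq_top_iff.mpr
    rw [← (Pi.basisFun ℝ (Fin n)).span_eq]
    apply Submodule.span_le.mpr
    rintro v ⟨i, rfl⟩
    have h1 : (Pi.basisFun ℝ (Fin n)) i = Pi.single i 1 := Pi.basisFun_apply ℝ (Fin n) i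
    rw [h1]
    have := vsub_mem_vectorSpan ℝ (hsingle i) (zero_mem_sav (r := r))
    simpa using this
  apply eq_top_iff.mpr
  intro x _
  have h0 : (0 : Fin n → ℝ) ∈ affineSpan ℝ (signedAntichainVectors r) :=
    mem_affineSpan ℝ zero_mem_sav
  have hd : x -ᵥ (0 : Fin n → ℝ) ∈ (affineSpan ℝ (signedAntichainVectors r)).direction := by
    rw [direction_affineSpan, hvs]
    trivial
  have := AffineSubspace.vadd_mem_of_mem_direction hd h0
  simpa using this

lemma interior_lattice_eq :
    {x : Fin n → ℝ | x ∈ interior (enrichedChainPolytope r) ∧ ∀ i, ∃ z : ℤ, x i = z}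
      = {0} := by
  ext x
  simp only [Set.mem_setOf_eq, Set.mem_singleton_iff]
  constructor
  · rintro ⟨hx, hint⟩
    obtain ⟨ε, hε, hball⟩ := Metric.isOpen_iff.mp isOpen_interior x hx
    funext i
    obtain ⟨z, hz⟩ := hint i
    have hup : x i + ε / 2 ≤ 1 := by
      have hmem : (fun j => x j + if i = j then ε / 2 else 0) ∈ enrichedChainPolytope r := by
        apply interior_subset
        apply hball
        rw [Metric.mem_ball, dist_pi_lt_iff hε]
        intro j
        rw [Real.dist_eq]
        have he : x j + (if i = j then ε / 2 else 0) - x j = if i = j then ε / 2 else 0 := by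
          ring
        rw [he]
        by_cases h : i = j
        · rw [if_pos h, abs_of_pos (by linarith)]; linarith
        · rw [if_neg h]; simpa using hε
      have := E_le_one i hmem
      simpa using this
    have hdown : -1 ≤ x i - ε / 2 := by
      have hmem : (fun j => x j - if i = j then ε / 2 else 0) ∈ enrichedChainPolytope r := by
        apply interior_subset
        apply hball
        rw [Metric.mem_ball, dist_pi_lt_iff hε]
        intro j
        rw [Real.dist_eq]
        have he : x j - (if i = j then ε / 2 else 0) - x j = -(if i = j then ε / 2 else 0) := by
          ring
        rw [he, abs_neg]
        by_cases h : i = j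
        · rw [if_pos h, abs_of_pos (by linarith)]; linarith
        · rw [if_neg h]; simpa using hε
      have := E_ge_neg_one i hmem
      simpa using this
    have h1 : (z : ℝ) < 1 := by rw [← hz]; linarith
    have h2 : (-1 : ℝ) < z := by rw [← hz]; linarith
    have hz1 : z < 1 := by exact_mod_cast h1
    have hz2 : -1 < z := by exact_mod_cast h2
    have : z = 0 := by omega
    rw [Pi.zero_apply, hz, this]
    simp
  · rintro rfl
    exact ⟨zero_mem_interior_E, fun i => ⟨0, by simp⟩⟩

lemma dual_lattice_eq (hr : IsPartialOrder (Fin n) r) :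
    dualBody (enrichedChainPolytope r)
      = convexHull ℝ
          {y : Fin n → ℝ | y ∈ dualBody (enrichedChainPolytope r) ∧ ∀ i, ∃ z : ℤ, y i = z} := by
  apply Set.Subset.antisymm
  · have hSCZ : signedChainVectors r ⊆
        {y : Fin n → ℝ | y ∈ dualBody (enrichedChainPolytope r) ∧ ∀ i, ∃ z : ℤ, y i = z} := by
      intro v hv
      refine ⟨scv_subset_dual hv, fun i => ?_⟩
      rcases hv.1 i with h | h | h
      · exact ⟨0, by rw [h]; simp⟩
      · exact ⟨1, by rw [h]; simp⟩
      · exact ⟨-1, by rw [h]; simp⟩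
    intro y hy
    apply convexHull_mono hSCZ
    have hclosedhull : IsClosed (convexHull ℝ (signedChainVectors r)) :=
      scv_finite.isClosed_convexHull ℝ
    have hDC : Convex ℝ (dualBody (enrichedChainPolytope r)) := dual_convex _
    have hint : interior (dualBody (enrichedChainPolytope r))
        ⊆ closure (convexHull ℝ (signedChainVectors r)) := by
      intro z hz
      rw [mem_closure_iff]
      intro W hWopen hWz
      obtain ⟨q, hqmem, hqrat⟩ := rat_point_of_open (hWopen.inter isOpen_interior)
        (⟨hWz, hz⟩ : z ∈ W ∩ interior (dualBody (enrichedChainPolytope r)))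
      exact ⟨q, hqmem.1, rational_mem_hull_scv hr (interior_subset hqmem.2) hqrat⟩
    have hyc : y ∈ closure (interior (dualBody (enrichedChainPolytope r))) := by
      rw [Metric.mem_closure_iff]
      intro ε hε
      set t : ℝ := min 1 (ε / (‖y‖ + 1)) with ht
      have hy1 : (0 : ℝ) ≤ ‖y‖ := norm_nonneg y
      have htpos : 0 < t := lt_min one_pos (div_pos hε (by linarith))
      have ht1 : t ≤ 1 := min_le_left _ _
      have htle : t ≤ ε / (‖y‖ + 1) := min_le_right _ _
      refine ⟨t • 0 + (1 - t) • y,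
        hDC.combo_interior_self_mem_interior zero_mem_interior_D hy htpos
          (by linarith) (by ring), ?_⟩
      have heq : t • (0 : Fin n → ℝ) + (1 - t) • y = (1 - t) • y := by
        rw [smul_zero, zero_add]
      rw [heq]
      have hdist : dist y ((1 - t) • y) = t * ‖y‖ := by
        rw [dist_eq_norm]
        have hsub : y - (1 - t) • y = t • y := by
          rw [sub_smul, one_smul, sub_sub_cancel]
        rw [hsub, norm_smul]
        simp [Real.norm_eq_abs, abs_of_pos htpos]
      rw [hdist]
      have hb : t * (‖y‖ + 1) ≤ ε := by
        rw [← le_div_iff₀ (by linarith : (0:ℝ) < ‖y‖ + 1)]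
        exact htle
      nlinarith
    have hfinal := closure_mono hint hyc
    rw [closure_closure] at hfinal
    rwa [hclosedhull.closure_eq] at hfinal
  · exact convexHull_min (fun y hy => hy.1) (dual_convex _)

end Main
/-- The enriched chain polytope is reflexive: it is full-dimensional, the origin is its
unique interior lattice point, and its dual polytope is again a lattice polytope
(it is the convex hull of its integer points). -/
theorem enrichedChainPolytope_reflexive {n : ℕ} (r : Fin n → Fin n → Prop)
    (hr : IsPartialOrder (Fin n) r) :
    affineSpan ℝ (enrichedChainPolytope r) = ⊤ ∧
    {x : Fin n → ℝ | x ∈ interior (enrichedChainPolytope r) ∧ ∀ i, ∃ z : ℤ, x i = z}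
      = {0} ∧
    dualBody (enrichedChainPolytope r)
      = convexHull ℝ
          {y : Fin n → ℝ | y ∈ dualBody (enrichedChainPolytope r) ∧ ∀ i, ∃ z : ℤ, y i = z} := by
  exact ⟨affine_top, interior_lattice_eq, dual_lattice_eq hr⟩
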